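/- Every finite threshold tolerance graph is a pairwise compatibility graph (PCG). (Theorem 3.) -/

import Mathlib

open SimpleGraph

def catRel (n x y : ℕ) : Prop := (y = x + 1 ∧ y < n) ∨ y = x + n

def cat (n : ℕ) : SimpleGraph (Fin (2*n)) :=
  SimpleGraph.fromRel (fun a b => catRel n a.val b.val)

lemma cat_adj {n : ℕ} {a b : Fin (2*n)} :
    (cat n).Adj a b ↔ catRel n a.val b.val ∨ catRel n b.val a.val := by
  have ha := a.isLt; have hb := b.isLt
  constructor
  · rintro ⟨-, h⟩; exact h
  · intro h
    refine ⟨fun hab => ?_, h⟩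
    subst hab
    rcases h with h | h <;> rcases h with ⟨h1, h2⟩ | h1 <;> omega

lemma cat_connected (n : ℕ) (hn : 0 < n) : (cat n).Connected := by
  have key : ∀ (k : ℕ) (a : Fin (2*n)), a.val = k →
      (cat n).Reachable a ⟨0, by omega⟩ := by
    intro k
    induction k using Nat.strong_induction_on with
    | _ k ih =>
      intro a hak
      rcases Nat.eq_zero_or_pos k with h0 | hpos
      · have : a = ⟨0, by omega⟩ := Fin.ext (by show a.val = 0; omega)
        rw [this]
      · by_cases hcase : a.val < n
        · have hadj : (cat n).Adj a ⟨a.val - 1, by omega⟩ := by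
            rw [cat_adj]; right
            exact Or.inl ⟨by show a.val = (a.val - 1) + 1; omega, by omega⟩
          exact hadj.reachable.trans (ih (a.val - 1) (by omega) ⟨a.val - 1, by omega⟩ rfl)
        · have hadj : (cat n).Adj a ⟨a.val - n, by omega⟩ := by
            rw [cat_adj]; right
            exact Or.inr (by show a.val = (a.val - n) + n; omega)
          exact hadj.reachable.trans (ih (a.val - n) (by omega) ⟨a.val - n, by omega⟩ rfl)
  have hne : Nonempty (Fin (2*n)) := ⟨⟨0, by omega⟩⟩
  exact ⟨fun a b => (key a.val a rfl).trans (key b.val b rfl).symm⟩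

lemma cat_leaf (n : ℕ) (i : ℕ) (hi : i < n) :
    ∃! x : Fin (2*n), (cat n).Adj ⟨n + i, by omega⟩ x := by
  refine ⟨⟨i, by omega⟩, cat_adj.mpr (Or.inr (Or.inr (by show n + i = i + n; omega))), ?_⟩
  intro x hx
  have hxlt := x.isLt
  rw [cat_adj] at hx
  apply Fin.ext
  show x.val = i
  simp only [catRel] at hx
  omega

/-- Spine walk from `i` to `i+d`. -/
def spineWalk (n d i : ℕ) (h : i + d < n) :
    (cat n).Walk ⟨i, by omega⟩ ⟨i + d, by omega⟩ :=
  match d with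
  | 0 => Walk.nil
  | d+1 => (spineWalk n d i (by omega)).concat
      (cat_adj.mpr (Or.inl (Or.inl ⟨rfl, by show i + (d+1) < n; omega⟩)))

lemma spineWalk_support (n d i : ℕ) (h : i + d < n) :
    (spineWalk n d i h).support.map Fin.val = List.range' i (d+1) := by
  induction d with
  | zero => simp [spineWalk]
  | succ d ih =>
    rw [spineWalk, Walk.support_concat, List.map_append, ih (by omega)]
    rw [List.range'_1_concat (n := d + 1), List.map_cons, List.map_nil]

lemma spineWalk_sum (n : ℕ) (w : Sym2 (Fin (2*n)) → ℝ) (F : ℕ → ℝ)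
    (hw : ∀ x y (hx : x < n) (hy : y < n) (hxy : y = x + 1),
      w s(⟨x, by omega⟩, ⟨y, by omega⟩) = F y - F x)
    (d i : ℕ) (h : i + d < n) :
    ((spineWalk n d i h).edges.map w).sum = F (i+d) - F i := by
  induction d with
  | zero => simp [spineWalk]
  | succ d ih =>
    rw [spineWalk, Walk.edges_concat, List.map_concat, List.sum_concat,
      ih (by omega), hw (i+d) (i+(d+1)) (by omega) (by omega) (by omega)]
    ring

/-- Walk from leaf `n+i` to leaf `n+j` for `i < j < n`. -/
def leafWalk (n i j : ℕ) (hij : i < j) (hj : j < n) :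
    (cat n).Walk ⟨n + i, by omega⟩ ⟨n + j, by omega⟩ :=
  Walk.cons
    (cat_adj.mpr (Or.inr (Or.inr (by show n + i = i + n; omega))) :
      (cat n).Adj ⟨n + i, by omega⟩ ⟨i, by omega⟩)
    (((spineWalk n (j - i) i (by omega)).copy rfl
        (Fin.ext (by show i + (j - i) = j; omega) :
          (⟨i + (j - i), by omega⟩ : Fin (2*n)) = ⟨j, by omega⟩)).append
      (Walk.cons
        (cat_adj.mpr (Or.inl (Or.inr (by show n + j = j + n; omega))) :
          (cat n).Adj ⟨j, by omega⟩ ⟨n + j, by omega⟩) Walk.nil))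

lemma leafWalk_support (n i j : ℕ) (hij : i < j) (hj : j < n) :
    (leafWalk n i j hij hj).support.map Fin.val =
      (n + i) :: (List.range' i (j - i + 1) ++ [n + j]) := by
  rw [leafWalk, Walk.support_cons, Walk.support_append, Walk.support_copy,
    List.map_cons]
  congr 1
  rw [List.map_append, spineWalk_support]
  congr 1

lemma leafWalk_isPath (n i j : ℕ) (hij : i < j) (hj : j < n) :
    (leafWalk n i j hij hj).IsPath := by
  rw [Walk.isPath_def]
  have h := leafWalk_support n i j hij hj
  have : ((n + i) :: (List.range' i (j - i + 1) ++ [n + j])).Nodup := by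
    rw [List.nodup_cons, List.nodup_append]
    refine ⟨?_, List.nodup_range', by simp, ?_⟩
    · intro hmem
      rcases List.mem_append.mp hmem with hm | hm
      · rw [List.mem_range'_1] at hm; omega
      · simp at hm; omega
    · intro a ha b hb
      rw [List.mem_range'_1] at ha; simp at hb; omega
  rw [← h] at this
  exact this.of_map _

lemma leafWalk_sum (n i j : ℕ) (hij : i < j) (hj : j < n)
    (w : Sym2 (Fin (2*n)) → ℝ) (F Pw : ℕ → ℝ)
    (hwS : ∀ x y (hx : x < n) (hy : y < n) (hxy : y = x + 1),
      w s(⟨x, by omega⟩, ⟨y, by omega⟩) = F y - F x)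
    (hwP : ∀ x y (hx : x < n) (hxy : y = n + x),
      w s(⟨y, by omega⟩, ⟨x, by omega⟩) = Pw x) :
    ((leafWalk n i j hij hj).edges.map w).sum = Pw i + (F j - F i) + Pw j := by
  rw [leafWalk, Walk.edges_cons, Walk.edges_append, Walk.edges_copy,
    Walk.edges_cons, Walk.edges_nil]
  rw [List.map_cons, List.map_append, List.sum_cons, List.sum_append]
  rw [spineWalk_sum n w F hwS (j-i) i (by omega)]
  rw [hwP i (n+i) (by omega) rfl]
  rw [show (s(⟨j, by omega⟩, ⟨n + j, by omega⟩) : Sym2 (Fin (2*n)))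
      = s(⟨n + j, by omega⟩, ⟨j, by omega⟩) from Sym2.eq_swap]
  simp only [List.map_cons, List.map_nil, List.sum_cons, List.sum_nil]
  rw [hwP j (n+j) (by omega) rfl]
  rw [show i + (j - i) = j by omega]
  ring


/-- A graph on `Fin N` in which every vertex has at most one neighbor with
smaller-or-equal index is acyclic. -/
lemma acyclic_of_unique_down {N : ℕ} (T : SimpleGraph (Fin N))
    (hdown : ∀ m a b : Fin N, T.Adj m a → T.Adj m b →
      a.val ≤ m.val → b.val ≤ m.val → a = b) : T.IsAcyclic := by
  have key : ∀ (m : Fin N) (p : T.Walk m m), p.IsCycle →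
      (∀ z ∈ p.support, z.val ≤ m.val) → False := by
    intro m p hp hsup
    cases p with
    | nil => exact Walk.IsCycle.not_of_nil hp
    | cons hadj q =>
      rename_i x
      have h3 : 3 ≤ (Walk.cons hadj q).length := hp.three_le_length
      rw [Walk.length_cons] at h3
      rw [Walk.cons_isCycle_iff] at hp
      have hqnil : ¬ q.reverse.Nil := by
        rw [Walk.not_nil_iff_lt_length, Walk.length_reverse]; omega
      set y := q.reverse.getVert 1 with hydef
      have hy : T.Adj m y := q.reverse.adj_snd hqnil
      have hmem : s(m, y) ∈ q.reverse.edges := by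
        have h1 : q.reverse.edges = s(m, y) :: q.reverse.tail.edges := by
          conv_lhs => rw [← Walk.cons_tail_eq q.reverse hqnil]
          rw [Walk.edges_cons]
        rw [h1]; exact List.mem_cons_self
      have hmem' : s(m, y) ∈ q.edges := by
        rwa [Walk.edges_reverse, List.mem_reverse] at hmem
      clear_value y
      have hxy : x ≠ y := by
        intro h; rw [← h] at hmem'; exact hp.2 hmem'
      have hxval : x.val ≤ m.val := by
        apply hsup; rw [Walk.support_cons]
        exact List.mem_cons_of_mem _ q.start_mem_support
      have hyval : y.val ≤ m.val := by
        apply hsup; rw [Walk.support_cons]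
        exact List.mem_cons_of_mem _ (q.snd_mem_support_of_mem_edges hmem')
      exact hxy (hdown m x y hadj hy hxval hyval)
  intro v c hc
  obtain ⟨m, hm, hmax⟩ := Finset.exists_max_image c.support.toFinset (fun z => z.val)
    ⟨v, by simp⟩
  rw [List.mem_toFinset] at hm
  refine key m (c.rotate m hm) (hc.rotate hm) ?_
  intro z hz
  rcases (Walk.mem_support_iff _).mp hz with rfl | hz'
  · exact le_refl _
  · have hrot := Walk.support_rotate c m hm
    have : z ∈ c.support.tail := hrot.mem_iff.mp hz'
    exact hmax z (List.mem_toFinset.mpr (List.mem_of_mem_tail this))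

-- === weights ===

noncomputable def f0 (n : ℕ) (tt gg : ℕ → ℝ) (dmin : ℝ) (x y : ℕ) : ℝ :=
  if y = x + 1 ∧ y < n then (tt x - tt y) / 2
  else if y = x + n then gg x + (dmin - tt x) / 2
  else 0

noncomputable def catW (n : ℕ) (tt gg : ℕ → ℝ) (dmin : ℝ) : Sym2 (Fin (2*n)) → ℝ :=
  Sym2.lift ⟨fun a b => f0 n tt gg dmin a.val b.val + f0 n tt gg dmin b.val a.val,
    fun a b => by ring⟩

lemma catW_mk (n : ℕ) (tt gg : ℕ → ℝ) (dmin : ℝ) (a b : Fin (2*n)) :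
    catW n tt gg dmin s(a, b) = f0 n tt gg dmin a.val b.val + f0 n tt gg dmin b.val a.val :=
  rfl

lemma f0_nonneg (n : ℕ) (tt gg : ℕ → ℝ) (dmin : ℝ)
    (hanti : ∀ x y : ℕ, x ≤ y → y < n → tt y ≤ tt x)
    (hgg : ∀ x, 0 ≤ gg x) (hd : ∀ x, tt x ≤ dmin) (x y : ℕ) :
    0 ≤ f0 n tt gg dmin x y := by
  rw [f0]
  split_ifs with h1 h2
  · have := hanti x y (by omega) h1.2
    linarith
  · have := hd x
    have := hgg x
    linarith
  · exact le_refl 0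

lemma catW_nonneg (n : ℕ) (tt gg : ℕ → ℝ) (dmin : ℝ)
    (hanti : ∀ x y : ℕ, x ≤ y → y < n → tt y ≤ tt x)
    (hgg : ∀ x, 0 ≤ gg x) (hd : ∀ x, tt x ≤ dmin) (e : Sym2 (Fin (2*n))) :
    0 ≤ catW n tt gg dmin e := by
  induction e using Sym2.ind with
  | _ a b =>
    rw [catW_mk]
    have h1 := f0_nonneg n tt gg dmin hanti hgg hd a.val b.val
    have h2 := f0_nonneg n tt gg dmin hanti hgg hd b.val a.val
    linarith

lemma catW_spine (n : ℕ) (tt gg : ℕ → ℝ) (dmin : ℝ)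
    (x y : ℕ) (hx : x < n) (hy : y < n) (hxy : y = x + 1) :
    catW n tt gg dmin s(⟨x, by omega⟩, ⟨y, by omega⟩)
      = (- tt y / 2) - (- tt x / 2) := by
  rw [catW_mk]
  show f0 n tt gg dmin x y + f0 n tt gg dmin y x = _
  rw [f0, f0, if_pos ⟨hxy, hy⟩, if_neg (by omega), if_neg (by omega)]
  ring

lemma catW_pend (n : ℕ) (tt gg : ℕ → ℝ) (dmin : ℝ)
    (x y : ℕ) (hx : x < n) (hxy : y = n + x) :
    catW n tt gg dmin s(⟨y, by omega⟩, ⟨x, by omega⟩)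
      = gg x + (dmin - tt x) / 2 := by
  rw [catW_mk]
  show f0 n tt gg dmin y x + f0 n tt gg dmin x y = _
  rw [f0, f0, if_neg (by omega), if_neg (by omega), if_neg (by omega), if_pos (by omega)]
  ring


lemma cat_acyclic (n : ℕ) : (cat n).IsAcyclic := by
  apply acyclic_of_unique_down
  intro m a b hma hmb hav hbv
  have h1 := m.isLt; have h2 := a.isLt; have h3 := b.isLt
  rw [cat_adj] at hma hmb
  simp only [catRel] at hma hmb
  apply Fin.ext
  omega


/-- `G` is a pairwise compatibility graph: there are a finite tree `T` with nonnegative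
edge weights, an injection of the vertices of `G` into the leaves of `T`, and bounds
`0 ≤ dmin ≤ dmax` such that two distinct vertices are adjacent iff the weighted
tree-distance of the corresponding leaves lies in `[dmin, dmax]`. -/
def IsPCG {V : Type} [Fintype V] (G : SimpleGraph V) : Prop :=
  ∃ (n : ℕ) (T : SimpleGraph (Fin n)) (w : Sym2 (Fin n) → ℝ)
      (f : V → Fin n) (dmin dmax : ℝ),
    T.Connected ∧ T.IsAcyclic ∧
    (∀ e ∈ T.edgeSet, 0 ≤ w e) ∧
    Function.Injective f ∧
    (∀ v : V, ∃! x : Fin n, T.Adj (f v) x) ∧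
    0 ≤ dmin ∧ dmin ≤ dmax ∧
    ∀ u v : V, u ≠ v →
      (G.Adj u v ↔ ∃ p : T.Walk (f u) (f v), p.IsPath ∧
        dmin ≤ (p.edges.map w).sum ∧ (p.edges.map w).sum ≤ dmax)

/-- `G` is a threshold tolerance graph: each vertex gets a positive weight `g v` and a
positive tolerance `t v`, and two distinct vertices are adjacent iff the sum of their
weights is at least the minimum of their tolerances. -/
def IsThresholdToleranceGraph {V : Type} [Fintype V] (G : SimpleGraph V) : Prop :=
  ∃ g t : V → ℝ,
    (∀ v, 0 < g v) ∧ (∀ v, 0 < t v) ∧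
    ∀ x y : V, x ≠ y →
      (G.Adj x y ↔ min (t x) (t y) ≤ g x + g y)

/-- Every finite threshold tolerance graph is a pairwise compatibility graph. -/
theorem thresholdTolerance_isPCG {V : Type} [Fintype V] (G : SimpleGraph V)
    (hG : IsThresholdToleranceGraph G) : IsPCG G := by
  classical
  obtain ⟨g, t, hg, ht, hGadj⟩ := hG
  rcases isEmpty_or_nonempty V with hV | hV
  · refine ⟨1, ⊥, fun _ => 0, fun v => (hV.elim v), 0, 0, ?_, isAcyclic_bot,
      fun e _ => le_refl 0, fun a => (hV.elim a), fun v => (hV.elim v),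
      le_refl 0, le_refl 0, fun u => (hV.elim u)⟩
    exact ⟨fun a b => by rw [Subsingleton.elim a b]⟩
  -- nonempty case
  set n := Fintype.card V with hndef
  have hn : 0 < n := Fintype.card_pos
  set e := Fintype.equivFin V with hedef
  set vert : Fin n → V := fun i => e.symm (Tuple.sort (fun i : Fin n => - t (e.symm i)) i)
    with hvertdef
  have hvertbij : Function.Bijective vert :=
    (Equiv.bijective e.symm).comp (Equiv.bijective _)
  set idx : V → Fin n := fun v => ((Tuple.sort (fun i : Fin n => - t (e.symm i))).symm (e v))
    with hidxdef
  have hvertidx : ∀ v : V, vert (idx v) = v := by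
    intro v; simp [hvertdef, hidxdef]
  have hidxinj : Function.Injective idx := by
    intro a b hab
    have : vert (idx a) = vert (idx b) := by rw [hab]
    rwa [hvertidx, hvertidx] at this
  have hanti : ∀ i j : Fin n, i ≤ j → t (vert j) ≤ t (vert i) := by
    intro i j hij
    have h2 := Tuple.monotone_sort (fun i : Fin n => - t (e.symm i)) hij
    simp only [Function.comp_apply] at h2
    have : - t (vert i) ≤ - t (vert j) := h2
    linarith
  set tt : ℕ → ℝ := fun k => if h : k < n then t (vert ⟨k, h⟩) else 0 with httdef
  set gg : ℕ → ℝ := fun k => if h : k < n then g (vert ⟨k, h⟩) else 0 with hggdef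
  set dmin : ℝ := ∑ v, t v with hdmindef
  set dmax : ℝ := dmin + 2 * ∑ v, g v with hdmaxdef
  have httpos : ∀ k, k < n → 0 < tt k := by
    intro k hk; simp only [httdef]; rw [dif_pos hk]; exact ht _
  have httnn : ∀ k, 0 ≤ tt k := by
    intro k; simp only [httdef]; split_ifs with h
    · exact (ht _).le
    · exact le_refl 0
  have hggnn : ∀ k, 0 ≤ gg k := by
    intro k; simp only [hggdef]; split_ifs with h
    · exact (hg _).le
    · exact le_refl 0
  have hdm : ∀ k, tt k ≤ dmin := by
    intro k; simp only [httdef, hdmindef]; split_ifs with h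
    · exact Finset.single_le_sum (fun i _ => (ht i).le) (Finset.mem_univ _)
    · exact Finset.sum_nonneg (fun i _ => (ht i).le)
  have hdmin0 : 0 ≤ dmin := le_trans (httnn 0) (hdm 0)
  have hgsum : ∀ v : V, g v ≤ ∑ x, g x :=
    fun v => Finset.single_le_sum (fun i _ => (hg i).le) (Finset.mem_univ _)
  have hanti' : ∀ x y : ℕ, x ≤ y → y < n → tt y ≤ tt x := by
    intro x y hxy hy
    simp only [httdef]
    rw [dif_pos hy, dif_pos (by omega : x < n)]
    exact hanti ⟨x, by omega⟩ ⟨y, hy⟩ hxy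
  have httidx : ∀ v : V, tt (idx v).val = t v := by
    intro v
    simp only [httdef]
    rw [dif_pos (idx v).isLt]
    congr 1
    rw [show (⟨(idx v).val, (idx v).isLt⟩ : Fin n) = idx v from rfl, hvertidx]
  have hggidx : ∀ v : V, gg (idx v).val = g v := by
    intro v
    simp only [hggdef]
    rw [dif_pos (idx v).isLt]
    congr 1
    rw [show (⟨(idx v).val, (idx v).isLt⟩ : Fin n) = idx v from rfl, hvertidx]
  -- the tree data
  refine ⟨2*n, cat n, catW n tt gg dmin,
    fun v => ⟨n + (idx v).val, by have := (idx v).isLt; omega⟩, dmin, dmax,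
    cat_connected n hn, cat_acyclic n,
    fun e _ => catW_nonneg n tt gg dmin hanti' hggnn hdm e,
    ?_, ?_, hdmin0, ?_, ?_⟩
  · -- injectivity
    intro a b hab
    apply hidxinj
    have : n + (idx a).val = n + (idx b).val := congrArg Fin.val hab
    exact Fin.ext (by omega)
  · -- leaf property
    intro v
    exact cat_leaf n (idx v).val (idx v).isLt
  · -- dmin ≤ dmax
    rw [hdmaxdef]
    have : (0:ℝ) ≤ ∑ x, g x := Finset.sum_nonneg (fun i _ => (hg i).le)
    linarith
  · -- adjacency characterization
    have core : ∀ u v : V, (idx u).val < (idx v).val →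
        (G.Adj u v ↔ ∃ p : (cat n).Walk ⟨n + (idx u).val, by have := (idx u).isLt; omega⟩
            ⟨n + (idx v).val, by have := (idx v).isLt; omega⟩, p.IsPath ∧
          dmin ≤ (p.edges.map (catW n tt gg dmin)).sum ∧
          (p.edges.map (catW n tt gg dmin)).sum ≤ dmax) := by
      intro u v hij
      have huv : u ≠ v := by
        intro h; rw [h] at hij; omega
      have hj : (idx v).val < n := (idx v).isLt
      set P := leafWalk n (idx u).val (idx v).val hij hj with hPdef
      have hPsum : ((P.edges.map (catW n tt gg dmin)).sum) =
          (gg (idx u).val + (dmin - tt (idx u).val) / 2)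
          + ((- tt (idx v).val / 2) - (- tt (idx u).val / 2))
          + (gg (idx v).val + (dmin - tt (idx v).val) / 2) := by
        rw [hPdef]
        exact leafWalk_sum n (idx u).val (idx v).val hij hj (catW n tt gg dmin)
          (fun k => - tt k / 2) (fun k => gg k + (dmin - tt k) / 2)
          (fun x y hx hy hxy => catW_spine n tt gg dmin x y hx hy hxy)
          (fun x y hx hxy => catW_pend n tt gg dmin x y hx hxy)
      have hsum' : ((P.edges.map (catW n tt gg dmin)).sum) =
          g u + g v + dmin - t v := by
        rw [hPsum, httidx, httidx, hggidx, hggidx]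
        ring
      have hmin : min (t u) (t v) = t v := by
        apply min_eq_right
        have := hanti (idx u) (idx v) (by rw [Fin.le_def]; omega)
        rwa [hvertidx, hvertidx] at this
      constructor
      · intro hGuv
        have hle : min (t u) (t v) ≤ g u + g v := (hGadj u v huv).mp hGuv
        rw [hmin] at hle
        refine ⟨P, leafWalk_isPath n _ _ hij hj, ?_, ?_⟩
        · rw [hsum']; linarith
        · rw [hsum', hdmaxdef]
          have h1 := hgsum u
          have h2 := hgsum v
          have h3 := ht v
          linarith
      · rintro ⟨p, hp, h1, h2⟩
        have hPp : p = P := by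
          have := (cat_acyclic n).path_unique ⟨p, hp⟩ ⟨P, leafWalk_isPath n _ _ hij hj⟩
          exact Subtype.ext_iff.mp this
        rw [hPp, hsum'] at h1
        apply (hGadj u v huv).mpr
        rw [hmin]
        linarith
    intro u v huv
    have hne : (idx u).val ≠ (idx v).val := by
      intro h
      exact huv (hidxinj (Fin.ext h))
    rcases Nat.lt_or_ge (idx u).val (idx v).val with hlt | hge
    · exact core u v hlt
    · have hlt : (idx v).val < (idx u).val := by omega
      rw [G.adj_comm, core v u hlt]
      constructor
      · rintro ⟨p, hp, ha, hb⟩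
        refine ⟨p.reverse, hp.reverse, ?_, ?_⟩ <;>
          rwa [Walk.edges_reverse, List.map_reverse, List.sum_reverse]
      · rintro ⟨p, hp, ha, hb⟩
        refine ⟨p.reverse, hp.reverse, ?_, ?_⟩ <;>
          rwa [Walk.edges_reverse, List.map_reverse, List.sum_reverse]
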